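/- Antipode polynomial identity (Lemma 3.2, word form). For every word w = a_1⋯a_{n+1} of length n+1 over A, the alternating sum over all ordered decompositions of w into nonempty factors satisfies Σ_{k=1}^{n+1} (−1)^{k−1} Σ_{(u_1,…,u_k) : each u_i nonempty, u_1 u_2 ⋯ u_k = w} u_1 ⧢ u_2 ⧢ ⋯ ⧢ u_k = (−1)^n a_{n+1} a_n ⋯ a_1, i.e. it equals −α(w) where α is the signed reversal. -/

import Mathlib

/-!
Words over an alphabet `A` are elements of `List A`; the free noncommutative
algebra `ℝ⟨A⟩` is realised as the free `ℝ`-module `List A →₀ ℝ` with the words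
as an `ℝ`-basis (a word `w` is the element `Finsupp.single w 1`, and
concatenation of words is list append).
-/

variable {A : Type*}

/-- The shuffle product of two words, valued in `ℝ⟨A⟩ = List A →₀ ℝ`:
`1 ⧢ w = w ⧢ 1 = w` and
`(a·u) ⧢ (b·v) = a·(u ⧢ (b·v)) + b·((a·u) ⧢ v)`,
where prepending a letter to every word of an element is `Finsupp.mapDomain (List.cons _)`. -/
noncomputable def shuffle : List A → List A → (List A →₀ ℝ)
  | [], v => Finsupp.single v 1
  | u, [] => Finsupp.single u 1
  | a :: u, b :: v =>
      Finsupp.mapDomain (List.cons a) (shuffle u (b :: v)) +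
        Finsupp.mapDomain (List.cons b) (shuffle (a :: u) v)
  termination_by u v => u.length + v.length

/-- The bilinear extension of the shuffle product to all of `ℝ⟨A⟩`. -/
noncomputable def shP (P Q : List A →₀ ℝ) : List A →₀ ℝ :=
  P.sum fun u cu => Q.sum fun v cv => (cu * cv) • shuffle u v

/-- The shuffle product `u₁ ⧢ u₂ ⧢ ⋯ ⧢ u_k` of a finite list of words
(the empty shuffle being the empty word, the unit of the shuffle algebra). -/
noncomputable def shuffleList (L : List (List A)) : List A →₀ ℝ :=
  L.foldr (fun u acc => shP (Finsupp.single u 1) acc) (Finsupp.single [] 1)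

/-- The unsigned reversal `ρ`, with `ρ(a₁⋯aₙ) = aₙ⋯a₁` on words, extended linearly. -/
noncomputable def rho (P : List A →₀ ℝ) : List A →₀ ℝ :=
  Finsupp.mapDomain List.reverse P

/-- The signed reversal `α`, with `α(a₁⋯aₙ) = (-1)ⁿ aₙ⋯a₁` on words, extended linearly. -/
noncomputable def alphaMap (P : List A →₀ ℝ) : List A →₀ ℝ :=
  P.sum fun w c => Finsupp.single w.reverse ((-1 : ℝ) ^ w.length * c)

/-- `D w = Σ_{k=1}^{|w|} (−1)^{k−1} Σ_{u₁⋯u_k = w, each uᵢ nonempty} u₁ ⧢ ⋯ ⧢ u_k`: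
the ordered decompositions of `w` into `k` nonempty factors are parametrised by the
compositions `c` of `|w|` with `c.length = k`, the factors being
`w.splitWrtComposition c`. -/
noncomputable def D (w : List A) : List A →₀ ℝ :=
  ∑ c : Composition w.length,
    ((-1 : ℝ)) ^ (c.length - 1) • shuffleList (w.splitWrtComposition c)

lemma shuffle_nil_left (v : List A) : shuffle ([] : List A) v = Finsupp.single v 1 := by
  cases v <;> rw [shuffle]

lemma shuffle_nil_right (u : List A) : shuffle u ([] : List A) = Finsupp.single u 1 := by
  cases u <;> rw [shuffle] <;> simp

lemma shuffle_cons_cons (a b : A) (u v : List A) :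
    shuffle (a :: u) (b :: v) =
      Finsupp.mapDomain (List.cons a) (shuffle u (b :: v)) +
        Finsupp.mapDomain (List.cons b) (shuffle (a :: u) v) := by
  rw [shuffle]

noncomputable def shL (u : List A) : (List A →₀ ℝ) →ₗ[ℝ] (List A →₀ ℝ) :=
  Finsupp.lsum ℝ fun v => LinearMap.toSpanSingleton ℝ _ (shuffle u v)

lemma shP_single (u : List A) (Q : List A →₀ ℝ) :
    shP (Finsupp.single u 1) Q = shL u Q := by
  rw [shP, Finsupp.sum_single_index]
  · simp [shL, Finsupp.lsum_apply, Finsupp.sum, LinearMap.toSpanSingleton_apply]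
  · simp [Finsupp.sum]

lemma shL_single (u v : List A) (c : ℝ) :
    shL u (Finsupp.single v c) = c • shuffle u v := by
  simp [shL, LinearMap.toSpanSingleton_apply]

lemma shuffleList_cons (u : List A) (L : List (List A)) :
    shuffleList (u :: L) = shL u (shuffleList L) := by
  rw [shuffleList, List.foldr_cons, ← shP_single]; rfl

lemma mapDomain_sum_smul (f : List A → List A) (s : Finset ℕ) (c : ℕ → ℝ)
    (g : ℕ → List A →₀ ℝ) :
    ∑ i ∈ s, c i • Finsupp.mapDomain f (g i) =
      Finsupp.mapDomain f (∑ i ∈ s, c i • g i) := by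
  rw [Finsupp.mapDomain_finset_sum]
  exact Finset.sum_congr rfl fun i _ => (Finsupp.mapDomain_smul _ _).symm

lemma mapDomain_neg' (f : List A → List A) (X : List A →₀ ℝ) :
    Finsupp.mapDomain f (-X) = -Finsupp.mapDomain f X :=
  map_neg (Finsupp.mapDomain.addMonoidHom f) X

lemma Fsum_zero (n : ℕ) (w : List A) (hw : w.length = n) (hne : w ≠ []) :
    ∑ i ∈ Finset.range (n + 1),
      ((-1 : ℝ)) ^ (n - i) • shuffle (w.take i) ((w.drop i).reverse) = 0 := by
  induction n using Nat.strong_induction_on generalizing w with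
  | _ n IH =>
  match w, hne with
  | a :: t, _ =>
  rcases t with _ | ⟨b, t'⟩
  · have hn : n = 1 := by simpa using hw.symm
    subst hn
    simp [Finset.sum_range_succ, shuffle_nil_left, shuffle_nil_right]
  · set t : List A := b :: t' with hts
    have htne : t ≠ [] := by simp [hts]
    have hn : n = t'.length + 2 := by simp [← hw, hts]
    subst hn
    set m := t'.length with hm
    have ht : t.length = m + 1 := by simp [hts, hm]
    set z := t.getLast htne with hz
    set y : List A := a :: t.dropLast with hy
    have hty : t = t.dropLast ++ [z] := (List.dropLast_append_getLast htne).symm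
    have hdl : t.dropLast.length = m := by simp [ht]
    have hyl : y.length = m + 1 := by simp [hy, hdl]
    have hwy : a :: t = y ++ [z] := by rw [hy]; simp [← hty]
    -- induction hypotheses
    have IHt := IH (m + 1) (by omega) t ht htne
    have IHy := IH (m + 1) (by omega) y hyl (by simp [hy])
    rw [Finset.sum_range_succ] at IHt
    have h1 : t.take (m + 1) = t := List.take_of_length_le (by omega)
    have h2 : t.drop (m + 1) = [] := List.drop_eq_nil_of_le (by omega)
    rw [h1, h2, Nat.sub_self, pow_zero, one_smul] at IHt
    simp only [List.reverse_nil, shuffle_nil_right] at IHt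
    have hA : ∑ i ∈ Finset.range (m + 1),
        ((-1 : ℝ)) ^ (m + 1 - i) • shuffle (t.take i) ((t.drop i).reverse)
        = -(Finsupp.single t 1) := eq_neg_of_add_eq_zero_left IHt
    rw [Finset.sum_range_succ'] at IHy
    simp only [Nat.succ_sub_succ, List.take_zero, List.drop_zero, Nat.sub_zero,
      shuffle_nil_left] at IHy
    have hZ : ∑ i ∈ Finset.range (m + 1),
        ((-1 : ℝ)) ^ (m - i) • shuffle (y.take (i + 1)) ((y.drop (i + 1)).reverse)
        = -(((-1 : ℝ)) ^ (m + 1) • Finsupp.single y.reverse 1) :=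
      eq_neg_of_add_eq_zero_left IHy
    -- split the sum
    rw [Finset.sum_range_succ', Finset.sum_range_succ]
    have hmid : ∀ i ∈ Finset.range (m + 1),
        ((-1 : ℝ)) ^ (m + 2 - (i + 1)) •
            shuffle ((a :: t).take (i + 1)) (((a :: t).drop (i + 1)).reverse)
          = ((-1 : ℝ)) ^ (m + 1 - i) •
              Finsupp.mapDomain (List.cons a) (shuffle (t.take i) ((t.drop i).reverse))
            + (-((-1 : ℝ)) ^ (m - i)) •
              Finsupp.mapDomain (List.cons z)
                (shuffle (y.take (i + 1)) ((y.drop (i + 1)).reverse)) := by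
      intro i hi
      rw [Finset.mem_range] at hi
      have esign1 : ((-1 : ℝ)) ^ (m + 2 - (i + 1)) = ((-1 : ℝ)) ^ (m + 1 - i) := by
        congr 1; omega
      have esign2 : ((-1 : ℝ)) ^ (m + 1 - i) = -((-1 : ℝ)) ^ (m - i) := by
        have h : m + 1 - i = (m - i) + 1 := by omega
        rw [h, pow_succ]; ring
      have e1 : (a :: t).take (i + 1) = a :: t.take i := List.take_succ_cons
      have e2 : (a :: t).drop (i + 1) = t.drop i := List.drop_succ_cons
      have e3 : t.drop i = t.dropLast.drop i ++ [z] := by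
        nth_rewrite 1 [hty]
        exact List.drop_append_of_le_length (by omega)
      have e4 : (t.drop i).reverse = z :: (t.dropLast.drop i).reverse := by
        rw [e3]; simp
      have e5 : y.take (i + 1) = a :: t.dropLast.take i := List.take_succ_cons
      have e6 : t.take i = t.dropLast.take i := by
        nth_rewrite 1 [hty]
        exact List.take_append_of_le_length (by omega)
      have e7 : y.drop (i + 1) = t.dropLast.drop i := List.drop_succ_cons
      calc ((-1 : ℝ)) ^ (m + 2 - (i + 1)) •
              shuffle ((a :: t).take (i + 1)) (((a :: t).drop (i + 1)).reverse)
          = ((-1 : ℝ)) ^ (m + 1 - i) •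
              shuffle (a :: t.take i) (z :: (t.dropLast.drop i).reverse) := by
            rw [esign1, e1, e2, e4]
        _ = ((-1 : ℝ)) ^ (m + 1 - i) •
              (Finsupp.mapDomain (List.cons a)
                  (shuffle (t.take i) (z :: (t.dropLast.drop i).reverse))
                + Finsupp.mapDomain (List.cons z)
                  (shuffle (a :: t.take i) ((t.dropLast.drop i).reverse))) := by
            rw [shuffle_cons_cons]
        _ = ((-1 : ℝ)) ^ (m + 1 - i) •
              Finsupp.mapDomain (List.cons a) (shuffle (t.take i) ((t.drop i).reverse))
            + (-((-1 : ℝ)) ^ (m - i)) •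
              Finsupp.mapDomain (List.cons z)
                (shuffle (y.take (i + 1)) ((y.drop (i + 1)).reverse)) := by
            rw [smul_add]
            congr 1
            · rw [e4]
            · rw [esign2, e5, e7, e6]
    rw [Finset.sum_congr rfl hmid, Finset.sum_add_distrib]
    simp only [neg_smul, Finset.sum_neg_distrib]
    rw [mapDomain_sum_smul, mapDomain_sum_smul, hA, hZ]
    -- remaining explicit terms
    have hf2 : (a :: t).take (m + 1 + 1) = a :: t := List.take_of_length_le (by simp [ht])
    have hf2' : (a :: t).drop (m + 1 + 1) = [] := List.drop_eq_nil_of_le (by simp [ht])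
    have hrev : (a :: t).reverse = z :: y.reverse := by
      rw [hwy]; simp
    rw [hf2, hf2', List.take_zero, List.drop_zero, hrev]
    simp only [List.reverse_nil, shuffle_nil_right, shuffle_nil_left,
      Nat.sub_self, pow_zero, one_smul, Nat.sub_zero]
    rw [mapDomain_neg', mapDomain_neg', Finsupp.mapDomain_smul,
      Finsupp.mapDomain_single, Finsupp.mapDomain_single]
    have hc : (a :: t) = a :: t := rfl
    have hpow : ((-1 : ℝ)) ^ (m + 2) = -((-1 : ℝ)) ^ (m + 1) := by
      rw [pow_succ]; ring
    rw [hpow]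
    module

lemma Tsum (n : ℕ) (w : List A) (hw : w.length = n + 1) :
    ∑ i ∈ Finset.range (n + 1),
        ((-1 : ℝ)) ^ (n - i) • shuffle (w.take (i + 1)) ((w.drop (i + 1)).reverse)
      = ((-1 : ℝ)) ^ n • Finsupp.single w.reverse 1 := by
  have h := Fsum_zero (n + 1) w hw (by intro h; simp [h] at hw)
  rw [Finset.sum_range_succ'] at h
  simp only [Nat.succ_sub_succ, List.take_zero, List.drop_zero, Nat.sub_zero,
    shuffle_nil_left] at h
  have h2 := eq_neg_of_add_eq_zero_left h
  rw [h2, pow_succ]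
  module

/-- The first-block splitting map for compositions. -/
def compFun (n : ℕ) (p : Σ k : Fin (n + 1), Composition (n - (k : ℕ))) :
    Composition (n + 1) :=
  ⟨((p.1 : ℕ) + 1) :: p.2.blocks, by
    intro i hi
    rcases List.mem_cons.1 hi with h | h
    · omega
    · exact p.2.blocks_pos h, by
    simp only [List.sum_cons, p.2.blocks_sum]
    have := p.1.isLt
    omega⟩

lemma compFun_bij (n : ℕ) : Function.Bijective (compFun n) := by
  constructor
  · rintro ⟨k, c⟩ ⟨k', c'⟩ h
    have hb : ((k : ℕ) + 1) :: c.blocks = ((k' : ℕ) + 1) :: c'.blocks :=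
      congrArg Composition.blocks h
    injection hb with h1 h2
    have hk : k = k' := Fin.ext (by omega)
    subst hk
    have hc : c = c' := Composition.ext h2
    rw [hc]
  · rintro ⟨bs, hpos, hsum⟩
    rcases bs with _ | ⟨b, l⟩
    · simp at hsum
    · have hb1 : 0 < b := hpos List.mem_cons_self
      have hsum' : b + l.sum = n + 1 := by simpa using hsum
      refine ⟨⟨⟨b - 1, by omega⟩,
        ⟨l, fun hi => hpos (List.mem_cons_of_mem _ hi), by simp; omega⟩⟩, ?_⟩
      apply Composition.ext
      simp [compFun]
      omega

lemma comp_zero_blocks (c : Composition 0) : c.blocks = [] := by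
  rcases hd : c.blocks with _ | ⟨x, l⟩
  · rfl
  · exfalso
    have hp : 0 < x := c.blocks_pos (hd ▸ (List.mem_cons_self : x ∈ x :: l))
    have hs := c.blocks_sum
    rw [hd] at hs
    simp at hs
    omega

lemma key_lemma (n : ℕ) : ∀ w : List A, w.length = n + 1 →
    (∑ c : Composition (n + 1),
        ((-1 : ℝ)) ^ (c.length - 1) • shuffleList (w.splitWrtComposition c))
      = ((-1 : ℝ)) ^ n • Finsupp.single w.reverse 1 := by
  induction n using Nat.strong_induction_on with
  | _ n IH =>
  intro w hw
  have hinner : ∀ m : ℕ, m ≤ n → ∀ v : List A, v.length = m →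
      (∑ c : Composition m, ((-1 : ℝ)) ^ c.length • shuffleList (v.splitWrtComposition c))
        = ((-1 : ℝ)) ^ m • Finsupp.single v.reverse 1 := by
    intro m hm v hv
    cases m with
    | zero =>
      have hv0 : v = [] := List.length_eq_zero_iff.mp hv
      subst hv0
      haveI : Unique (Composition 0) :=
        { default := ⟨[], by simp, by simp⟩
          uniq := fun c => Composition.ext (comp_zero_blocks c) }
      rw [Fintype.sum_unique]
      simp [Composition.length, List.splitWrtComposition, comp_zero_blocks,
        List.splitWrtCompositionAux, shuffleList]
    | succ m' =>
      have hIH := IH m' (by omega) v hv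
      have hlen : ∀ c : Composition (m' + 1),
          ((-1 : ℝ)) ^ c.length = -((-1 : ℝ)) ^ (c.length - 1) := by
        intro c
        have h1 : 0 < c.length := c.length_pos_of_pos (Nat.succ_pos m')
        have h2 : c.length = (c.length - 1) + 1 := by omega
        nth_rewrite 1 [h2]
        rw [pow_succ]; ring
      calc ∑ c : Composition (m' + 1),
              ((-1 : ℝ)) ^ c.length • shuffleList (v.splitWrtComposition c)
          = ∑ c : Composition (m' + 1),
              -(((-1 : ℝ)) ^ (c.length - 1) • shuffleList (v.splitWrtComposition c)) := by
            refine Finset.sum_congr rfl fun c _ => ?_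
            rw [hlen c, neg_smul]
        _ = -(((-1 : ℝ)) ^ m' • Finsupp.single v.reverse 1) := by
            rw [Finset.sum_neg_distrib, hIH]
        _ = ((-1 : ℝ)) ^ (m' + 1) • Finsupp.single v.reverse 1 := by
            rw [pow_succ]; module
  have hre : (∑ c : Composition (n + 1),
        ((-1 : ℝ)) ^ (c.length - 1) • shuffleList (w.splitWrtComposition c))
      = ∑ p : Σ k : Fin (n + 1), Composition (n - (k : ℕ)),
          ((-1 : ℝ)) ^ ((compFun n p).length - 1) •
            shuffleList (w.splitWrtComposition (compFun n p)) :=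
    (Fintype.sum_bijective (compFun n) (compFun_bij n) _ _ fun _ => rfl).symm
  rw [hre, ← Finset.univ_sigma_univ, Finset.sum_sigma]
  have hterm : ∀ k : Fin (n + 1),
      (∑ c : Composition (n - (k : ℕ)),
          ((-1 : ℝ)) ^ ((compFun n ⟨k, c⟩).length - 1) •
            shuffleList (w.splitWrtComposition (compFun n ⟨k, c⟩)))
        = ((-1 : ℝ)) ^ (n - (k : ℕ)) •
            shuffle (w.take ((k : ℕ) + 1)) ((w.drop ((k : ℕ) + 1)).reverse) := by
    intro k
    have hstep : ∀ c : Composition (n - (k : ℕ)),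
        ((-1 : ℝ)) ^ ((compFun n ⟨k, c⟩).length - 1) •
            shuffleList (w.splitWrtComposition (compFun n ⟨k, c⟩))
          = shL (w.take ((k : ℕ) + 1))
              (((-1 : ℝ)) ^ c.length •
                shuffleList ((w.drop ((k : ℕ) + 1)).splitWrtComposition c)) := by
      intro c
      have hb : (compFun n ⟨k, c⟩).length - 1 = c.length := by
        simp [Composition.length, compFun]
      have hsplit : w.splitWrtComposition (compFun n ⟨k, c⟩)
          = w.take ((k : ℕ) + 1) :: (w.drop ((k : ℕ) + 1)).splitWrtComposition c := by
        show List.splitWrtCompositionAux w (((k : ℕ) + 1) :: c.blocks) = _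
        rw [List.splitWrtCompositionAux_cons]
        rfl
      rw [hb, hsplit, shuffleList_cons, map_smul]
    rw [Finset.sum_congr rfl fun c _ => hstep c, ← map_sum,
      hinner (n - (k : ℕ)) (by omega) (w.drop ((k : ℕ) + 1)) (by simp [hw]),
      map_smul, shL_single, one_smul]
  rw [Finset.sum_congr rfl fun k _ => hterm k]
  rw [Fin.sum_univ_eq_sum_range
    (fun i => ((-1 : ℝ)) ^ (n - i) • shuffle (w.take (i + 1)) ((w.drop (i + 1)).reverse))]
  exact Tsum n w hw


/-- **Antipode polynomial identity** (Lemma 3.2, word form): for every word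
`w = a₁⋯a_{n+1}`, the alternating sum over all ordered decompositions of `w` into
nonempty factors of the shuffle products of the factors equals
`(−1)ⁿ a_{n+1}⋯a₁ = −α(w)`. -/
theorem antipode_polynomial (n : ℕ) (a : Fin (n + 1) → A) :
    ∑ c : Composition (n + 1),
        ((-1 : ℝ)) ^ (c.length - 1) • shuffleList ((List.ofFn a).splitWrtComposition c) =
      ((-1 : ℝ)) ^ n • Finsupp.single (List.ofFn a).reverse (1 : ℝ) := by
  exact key_lemma n (List.ofFn a) (by simp)
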